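/- Let (a,b) be a Golay complementary pair of length N, let (c,d) be its standard Golay complementary mate (c_k = conj(b_{N−1−k}), d_k = −conj(a_{N−1−k})), let x1,x2,x3,x4 ∈ {+1,−1} with x1·x2 + x3·x4 = 0, and define p = x1·a ∥ x2·b ∥ x3·a ∥ x4·b and q = x1·c ∥ x2·d ∥ x3·c ∥ x4·d of length 4N. Then for every shift τ with 2N ≤ τ ≤ 3N−1, C_p(τ) + C_q(τ) = 0. -/

import Mathlib

open Finset

/-- Aperiodic cross-correlation of length-`L` complex sequences at shift `0 ≤ τ`. -/
noncomputable def aCorr (a b : ℕ → ℂ) (L τ : ℕ) : ℂ :=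
  ∑ k ∈ Finset.range (L - τ), a k * (starRingEnd ℂ) (b (k + τ))

/-- Periodic cross-correlation of length-`L` complex sequences at shift `τ`. -/
noncomputable def pCorr (a b : ℕ → ℂ) (L τ : ℕ) : ℂ :=
  ∑ k ∈ Finset.range L, a k * (starRingEnd ℂ) (b ((k + τ) % L))

/-- The length-`4N` sequence `x1·a ∥ x2·b ∥ x3·a ∥ x4·b`. -/
noncomputable def quadConcat (N : ℕ) (x1 x2 x3 x4 : ℂ) (a b : ℕ → ℂ) : ℕ → ℂ :=
  fun n =>
    if n < N then x1 * a n
    else if n < 2 * N then x2 * b (n - N)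
    else if n < 3 * N then x3 * a (n - 2 * N)
    else x4 * b (n - 3 * N)

lemma quadConcat_one (N : ℕ) (x1 x2 x3 x4 : ℂ) (a b : ℕ → ℂ) {n : ℕ} (h : n < N) :
    quadConcat N x1 x2 x3 x4 a b n = x1 * a n := by
  unfold quadConcat; rw [if_pos h]

lemma quadConcat_two (N : ℕ) (x1 x2 x3 x4 : ℂ) (a b : ℕ → ℂ) {n : ℕ}
    (h1 : N ≤ n) (h2 : n < 2 * N) :
    quadConcat N x1 x2 x3 x4 a b n = x2 * b (n - N) := by
  unfold quadConcat; rw [if_neg (by omega), if_pos h2]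

lemma quadConcat_three (N : ℕ) (x1 x2 x3 x4 : ℂ) (a b : ℕ → ℂ) {n : ℕ}
    (h1 : 2 * N ≤ n) (h2 : n < 3 * N) :
    quadConcat N x1 x2 x3 x4 a b n = x3 * a (n - 2 * N) := by
  unfold quadConcat; rw [if_neg (by omega), if_neg (by omega), if_pos h2]

lemma quadConcat_four (N : ℕ) (x1 x2 x3 x4 : ℂ) (a b : ℕ → ℂ) {n : ℕ}
    (h1 : 3 * N ≤ n) :
    quadConcat N x1 x2 x3 x4 a b n = x4 * b (n - 3 * N) := by
  unfold quadConcat; rw [if_neg (by omega), if_neg (by omega), if_neg (by omega)]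

theorem statement5 (N : ℕ) (a b c d : ℕ → ℂ) (x1 x2 x3 x4 : ℂ)
    (hx1 : x1 = 1 ∨ x1 = -1) (hx2 : x2 = 1 ∨ x2 = -1)
    (hx3 : x3 = 1 ∨ x3 = -1) (hx4 : x4 = 1 ∨ x4 = -1)
    (hsum : x1 * x2 + x3 * x4 = 0)
    (hGCP : ∀ τ, 1 ≤ τ → τ ≤ N - 1 → aCorr a a N τ + aCorr b b N τ = 0)
    (hc : ∀ k, c k = (starRingEnd ℂ) (b (N - 1 - k)))
    (hd : ∀ k, d k = -(starRingEnd ℂ) (a (N - 1 - k)))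
    (p q : ℕ → ℂ)
    (hp : p = quadConcat N x1 x2 x3 x4 a b)
    (hq : q = quadConcat N x1 x2 x3 x4 c d) :
    ∀ τ, 2 * N ≤ τ → τ ≤ 3 * N - 1 →
      aCorr p p (4 * N) τ + aCorr q q (4 * N) τ = 0 := by
  intro τ hτ1 hτ2
  rcases Nat.eq_zero_or_pos N with hN | hN
  · subst hN
    simp [aCorr]
  have hs3 : (starRingEnd ℂ) x3 = x3 := by rcases hx3 with h | h <;> simp [h]
  have hs4 : (starRingEnd ℂ) x4 = x4 := by rcases hx4 with h | h <;> simp [h]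
  have hkey : x1 * x3 + x2 * x4 = 0 := by
    rcases hx1 with h1 | h1 <;> rcases hx2 with h2 | h2 <;>
      rcases hx3 with h3 | h3 <;> rcases hx4 with h4 | h4 <;>
      subst h1 h2 h3 h4 <;> revert hsum <;> norm_num
  subst hp; subst hq
  unfold aCorr
  rw [← Finset.sum_range_reflect
    (fun k => quadConcat N x1 x2 x3 x4 c d k *
      (starRingEnd ℂ) (quadConcat N x1 x2 x3 x4 c d (k + τ))) (4 * N - τ)]
  rw [← Finset.sum_add_distrib]
  apply Finset.sum_eq_zero
  intro k hk
  rw [Finset.mem_range] at hk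
  have e0 : 4 * N - τ - 1 - k + τ = 4 * N - 1 - k := by omega
  simp only [e0]
  by_cases h1 : k + τ < 3 * N
  · -- case A: k < N, k+τ in third block
    rw [quadConcat_one N x1 x2 x3 x4 a b (show k < N by omega),
        quadConcat_three N x1 x2 x3 x4 a b (show 2 * N ≤ k + τ by omega) h1,
        quadConcat_two N x1 x2 x3 x4 c d (show N ≤ 4 * N - τ - 1 - k by omega)
          (show 4 * N - τ - 1 - k < 2 * N by omega),
        quadConcat_four N x1 x2 x3 x4 c d (show 3 * N ≤ 4 * N - 1 - k by omega),
        hd, hd]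
    have e1 : N - 1 - (4 * N - τ - 1 - k - N) = k + τ - 2 * N := by omega
    have e2 : N - 1 - (4 * N - 1 - k - 3 * N) = k := by omega
    rw [e1, e2]
    simp only [map_mul, map_neg, Complex.conj_conj, hs3, hs4]
    linear_combination (a k * (starRingEnd ℂ) (a (k + τ - 2 * N))) * hkey
  · by_cases h2 : k < N
    · -- case B: k < N, k+τ in fourth block
      rw [quadConcat_one N x1 x2 x3 x4 a b h2,
          quadConcat_four N x1 x2 x3 x4 a b (show 3 * N ≤ k + τ by omega),
          quadConcat_one N x1 x2 x3 x4 c d (show 4 * N - τ - 1 - k < N by omega),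
          quadConcat_four N x1 x2 x3 x4 c d (show 3 * N ≤ 4 * N - 1 - k by omega),
          hc, hd]
      have e1 : N - 1 - (4 * N - τ - 1 - k) = k + τ - 3 * N := by omega
      have e2 : N - 1 - (4 * N - 1 - k - 3 * N) = k := by omega
      rw [e1, e2]
      simp only [map_mul, map_neg, Complex.conj_conj, hs4]
      ring
    · -- case C: N ≤ k
      rw [quadConcat_two N x1 x2 x3 x4 a b (by omega) (show k < 2 * N by omega),
          quadConcat_four N x1 x2 x3 x4 a b (show 3 * N ≤ k + τ by omega),
          quadConcat_one N x1 x2 x3 x4 c d (show 4 * N - τ - 1 - k < N by omega),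
          quadConcat_three N x1 x2 x3 x4 c d (show 2 * N ≤ 4 * N - 1 - k by omega)
            (show 4 * N - 1 - k < 3 * N by omega),
          hc, hc]
      have e1 : N - 1 - (4 * N - τ - 1 - k) = k + τ - 3 * N := by omega
      have e2 : N - 1 - (4 * N - 1 - k - 2 * N) = k - N := by omega
      rw [e1, e2]
      simp only [map_mul, map_neg, Complex.conj_conj, hs3, hs4]
      linear_combination (b (k - N) * (starRingEnd ℂ) (b (k + τ - 3 * N))) * hkey
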